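/- Let S be a nonempty finite set of integers with max S − min S ≤ N for a real N > 0. Suppose S is covered by finitely many pairwise disjoint intervals I₁, …, I_J, each of positive length L(I_j) and each satisfying S ∩ I_j ≠ ∅. Then |S| ≤ N·max_j (|S ∩ I_j| / L(I_j)) + 2·max_j |S ∩ I_j|. -/
import Mathlib

open Set MeasureTheory

theorem stmt_7 (S : Finset ℤ) (hS : S.Nonempty) (N : ℝ) (hN : 0 < N)
    (hrange : ((S.max' hS - S.min' hS : ℤ) : ℝ) ≤ N)
    (J : ℕ) (c d : Fin J → ℝ) (hcd : ∀ j, c j < d j)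
    (hdisj : ∀ i j, i ≠ j → Disjoint (Set.Icc (c i) (d i)) (Set.Icc (c j) (d j)))
    (hcover : ∀ n ∈ S, ∃ j, (n:ℝ) ∈ Set.Icc (c j) (d j))
    (hne : ∀ j, ∃ n ∈ S, (n:ℝ) ∈ Set.Icc (c j) (d j)) :
    (S.card : ℝ) ≤
      N * (⨆ j : Fin J,
            (({n : ℤ | n ∈ S ∧ (n:ℝ) ∈ Set.Icc (c j) (d j)}.ncard : ℝ) / (d j - c j)))
      + 2 * (⨆ j : Fin J,
            (({n : ℤ | n ∈ S ∧ (n:ℝ) ∈ Set.Icc (c j) (d j)}.ncard : ℝ))) := by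
  classical
  obtain ⟨n0, hn0⟩ := id hS
  obtain ⟨j0, _⟩ := hcover n0 hn0
  haveI : Nonempty (Fin J) := ⟨j0⟩
  set m : ℝ := ((S.min' hS : ℤ) : ℝ) with hm
  set M : ℝ := ((S.max' hS : ℤ) : ℝ) with hM
  have hmem : ∀ n ∈ S, m ≤ (n:ℝ) ∧ (n:ℝ) ≤ M := by
    intro n hn
    rw [hm, hM]
    constructor
    · exact_mod_cast S.min'_le n hn
    · exact_mod_cast S.le_max' n hn
  have hmM : m ≤ M := le_trans (hmem n0 hn0).1 (hmem n0 hn0).2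
  have hMN : M - m ≤ N := by
    push_cast at hrange; linarith
  set T : Fin J → Finset ℤ := fun j => S.filter (fun n => (n:ℝ) ∈ Set.Icc (c j) (d j)) with hT
  have hTcard : ∀ j, ({n : ℤ | n ∈ S ∧ (n:ℝ) ∈ Set.Icc (c j) (d j)}.ncard) = (T j).card := by
    intro j
    rw [show {n : ℤ | n ∈ S ∧ (n:ℝ) ∈ Set.Icc (c j) (d j)} = ↑(T j) from by
      ext x; simp [hT], Set.ncard_coe_finset]
  simp only [hTcard]
  set sup1 : ℝ := ⨆ j : Fin J, (((T j).card : ℝ) / (d j - c j)) with hsup1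
  set sup2 : ℝ := ⨆ j : Fin J, ((T j).card : ℝ) with hsup2
  have hbdd1 : BddAbove (Set.range fun j : Fin J => ((T j).card : ℝ) / (d j - c j)) :=
    Set.Finite.bddAbove (Set.finite_range _)
  have hbdd2 : BddAbove (Set.range fun j : Fin J => ((T j).card : ℝ)) :=
    Set.Finite.bddAbove (Set.finite_range _)
  have hsup1le : ∀ j, ((T j).card : ℝ) / (d j - c j) ≤ sup1 := fun j => le_ciSup hbdd1 j
  have hsup2le : ∀ j, ((T j).card : ℝ) ≤ sup2 := fun j => le_ciSup hbdd2 j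
  have hsup1nn : 0 ≤ sup1 :=
    le_trans (div_nonneg (Nat.cast_nonneg _) (le_of_lt (sub_pos.mpr (hcd j0)))) (hsup1le j0)
  have hsup2nn : 0 ≤ sup2 := le_trans (Nat.cast_nonneg _) (hsup2le j0)
  have hcardle1 : ∀ j, ((T j).card : ℝ) ≤ sup1 * (d j - c j) := by
    intro j
    have h := hsup1le j
    have hL : 0 < d j - c j := sub_pos.mpr (hcd j)
    rw [div_le_iff₀ hL] at h
    exact h
  -- S.card ≤ sum of T j cards
  have hScard : (S.card : ℝ) ≤ ∑ j : Fin J, ((T j).card : ℝ) := by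
    have h1 : S ⊆ Finset.univ.biUnion T := by
      intro n hn
      obtain ⟨j, hj⟩ := hcover n hn
      exact Finset.mem_biUnion.mpr ⟨j, Finset.mem_univ _, Finset.mem_filter.mpr ⟨hn, hj⟩⟩
    have h2 := Finset.card_le_card h1
    have h3 := Finset.card_biUnion_le (s := Finset.univ) (t := T)
    have := le_trans h2 h3
    exact_mod_cast this
  set inside : Finset (Fin J) := Finset.univ.filter (fun j => m ≤ c j ∧ d j ≤ M) with hin
  set outside : Finset (Fin J) := Finset.univ.filter (fun j => ¬(m ≤ c j ∧ d j ≤ M)) with hout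
  -- sum of lengths inside ≤ M - m
  have hlen : ∑ j ∈ inside, (d j - c j) ≤ M - m := by
    have hmeas : volume (⋃ j ∈ inside, Set.Icc (c j) (d j))
        = ∑ j ∈ inside, volume (Set.Icc (c j) (d j)) := by
      apply measure_biUnion_finset
      · intro i hi j hj hij
        exact hdisj i j hij
      · intro i _; exact measurableSet_Icc
    have hsub : (⋃ j ∈ inside, Set.Icc (c j) (d j)) ⊆ Set.Icc m M := by
      apply Set.iUnion₂_subset
      intro j hj
      have := Finset.mem_filter.mp hj
      exact Set.Icc_subset_Icc this.2.1 this.2.2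
    have hle : ∑ j ∈ inside, volume (Set.Icc (c j) (d j)) ≤ volume (Set.Icc m M) := by
      rw [← hmeas]; exact measure_mono hsub
    simp only [Real.volume_Icc] at hle
    rw [← ENNReal.ofReal_sum_of_nonneg (fun j _ => le_of_lt (sub_pos.mpr (hcd j)))] at hle
    exact (ENNReal.ofReal_le_ofReal_iff (by linarith)).mp hle
  -- outside has at most 2 elements
  have houtcard : outside.card ≤ 2 := by
    set A : Finset (Fin J) := Finset.univ.filter (fun j => c j < m) with hA
    set B : Finset (Fin J) := Finset.univ.filter (fun j => M < d j) with hB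
    have hAcard : A.card ≤ 1 := by
      apply Finset.card_le_one.mpr
      intro i hi j hj
      by_contra hij
      have hmi : m ∈ Set.Icc (c i) (d i) := by
        obtain ⟨n, hn, hn2⟩ := hne i
        exact ⟨le_of_lt (Finset.mem_filter.mp hi).2, le_trans (hmem n hn).1 hn2.2⟩
      have hmj : m ∈ Set.Icc (c j) (d j) := by
        obtain ⟨n, hn, hn2⟩ := hne j
        exact ⟨le_of_lt (Finset.mem_filter.mp hj).2, le_trans (hmem n hn).1 hn2.2⟩
      exact (hdisj i j hij).ne_of_mem hmi hmj rfl
    have hBcard : B.card ≤ 1 := by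
      apply Finset.card_le_one.mpr
      intro i hi j hj
      by_contra hij
      have hmi : M ∈ Set.Icc (c i) (d i) := by
        obtain ⟨n, hn, hn2⟩ := hne i
        exact ⟨le_trans hn2.1 (hmem n hn).2, le_of_lt (Finset.mem_filter.mp hi).2⟩
      have hmj : M ∈ Set.Icc (c j) (d j) := by
        obtain ⟨n, hn, hn2⟩ := hne j
        exact ⟨le_trans hn2.1 (hmem n hn).2, le_of_lt (Finset.mem_filter.mp hj).2⟩
      exact (hdisj i j hij).ne_of_mem hmi hmj rfl
    have hsub : outside ⊆ A ∪ B := by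
      intro j hj
      have := Finset.mem_filter.mp hj
      rw [not_and_or, not_le, not_le] at this
      rcases this.2 with h | h
      · exact Finset.mem_union_left _ (Finset.mem_filter.mpr ⟨Finset.mem_univ _, h⟩)
      · exact Finset.mem_union_right _ (Finset.mem_filter.mpr ⟨Finset.mem_univ _, h⟩)
    calc outside.card ≤ (A ∪ B).card := Finset.card_le_card hsub
      _ ≤ A.card + B.card := Finset.card_union_le _ _
      _ ≤ 2 := by omega
  -- combine
  have hsplit : ∑ j : Fin J, ((T j).card : ℝ)
      = ∑ j ∈ inside, ((T j).card : ℝ) + ∑ j ∈ outside, ((T j).card : ℝ) :=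
    (Finset.sum_filter_add_sum_filter_not _ _ _).symm
  have h1 : ∑ j ∈ inside, ((T j).card : ℝ) ≤ sup1 * N := by
    calc ∑ j ∈ inside, ((T j).card : ℝ)
        ≤ ∑ j ∈ inside, sup1 * (d j - c j) :=
          Finset.sum_le_sum (fun j _ => hcardle1 j)
      _ = sup1 * ∑ j ∈ inside, (d j - c j) := by rw [Finset.mul_sum]
      _ ≤ sup1 * (M - m) := by
          exact mul_le_mul_of_nonneg_left hlen hsup1nn
      _ ≤ sup1 * N := mul_le_mul_of_nonneg_left (le_trans hMN le_rfl) hsup1nn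
  have h2 : ∑ j ∈ outside, ((T j).card : ℝ) ≤ 2 * sup2 := by
    calc ∑ j ∈ outside, ((T j).card : ℝ)
        ≤ ∑ j ∈ outside, sup2 := Finset.sum_le_sum (fun j _ => hsup2le j)
      _ = outside.card * sup2 := by rw [Finset.sum_const, nsmul_eq_mul]
      _ ≤ 2 * sup2 := by
          apply mul_le_mul_of_nonneg_right _ hsup2nn
          exact_mod_cast houtcard
  calc (S.card : ℝ) ≤ ∑ j : Fin J, ((T j).card : ℝ) := hScard
    _ = ∑ j ∈ inside, ((T j).card : ℝ) + ∑ j ∈ outside, ((T j).card : ℝ) := hsplit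
    _ ≤ sup1 * N + 2 * sup2 := add_le_add h1 h2
    _ = N * sup1 + 2 * sup2 := by ring
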